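/- Let ρ(s) = |Ψ(s)⟩⟨Ψ(s)| be a differentiable family of pure states satisfying i d/ds |Ψ(s)⟩ = H(s)|Ψ(s)⟩ where H(s) = Σ_u H_u(s), and let X be a subsystem with reduced state ρ_X(s) = Tr_{X^c} ρ(s). If each H_u(s) can be approximated by an operator H̄_u(s) supported on X^c with ‖H̄_u(s) − H_u(s)‖ ≤ ε_u(s), then ‖∂_s ρ_X(s)‖₁ ≤ 2 Σ_u ε_u(s). -/

import Mathlib

open Matrix Kronecker
open scoped ComplexOrder

/-- The trace norm `‖A‖₁ = Tr √(A†A)`. -/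
noncomputable def traceNorm {n : Type*} [Fintype n] [DecidableEq n]
    (A : Matrix n n ℂ) : ℝ :=
  (((Matrix.isHermitian_conjTranspose_mul_self A).eigenvectorUnitary.1 *
      diagonal (((↑) : ℝ → ℂ) ∘ (√·) ∘ (Matrix.isHermitian_conjTranspose_mul_self A).eigenvalues) *
      (star (Matrix.isHermitian_conjTranspose_mul_self A).eigenvectorUnitary :
        Matrix n n ℂ)).trace).re

/-- The operator (spectral) norm of a matrix. -/
noncomputable def opNorm {n : Type*} [Fintype n] [DecidableEq n]
    (A : Matrix n n ℂ) : ℝ :=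
  ‖Matrix.toEuclideanCLM (𝕜 := ℂ) A‖

open scoped InnerProductSpace

section Aux

variable {n : Type*} [Fintype n] [DecidableEq n]

lemma opNorm_nonneg' (A : Matrix n n ℂ) : 0 ≤ opNorm A := norm_nonneg _

lemma opNorm_mul_le' (A B : Matrix n n ℂ) : opNorm (A * B) ≤ opNorm A * opNorm B := by
  unfold opNorm
  rw [_root_.map_mul]
  exact norm_mul_le _ _

lemma opNorm_comm_le' (A B : Matrix n n ℂ) :
    opNorm (A * B - B * A) ≤ 2 * opNorm A * opNorm B := by
  have h : opNorm (A * B - B * A) ≤ opNorm (A * B) + opNorm (B * A) := by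
    unfold opNorm
    rw [map_sub]
    exact norm_sub_le _ _
  have h1 := opNorm_mul_le' A B
  have h2 := opNorm_mul_le' B A
  nlinarith [mul_comm (opNorm B) (opNorm A)]

lemma opNorm_le_one_of_unitary' (A : Matrix n n ℂ) (h : Aᴴ * A = 1) : opNorm A ≤ 1 := by
  set g := Matrix.toEuclideanCLM (𝕜 := ℂ) A with hg
  have hsg : star g * g = 1 := by
    rw [hg, ← map_star, ← _root_.map_mul, Matrix.star_eq_conjTranspose, h, _root_.map_one]
  have hC : ‖g‖ * ‖g‖ = ‖star g * g‖ := (CStarRing.norm_star_mul_self).symm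
  rw [hsg] at hC
  have hone : ‖(1 : EuclideanSpace ℂ n →L[ℂ] EuclideanSpace ℂ n)‖ ≤ 1 :=
    ContinuousLinearMap.norm_id_le
  have h0 : 0 ≤ ‖g‖ := norm_nonneg _
  unfold opNorm
  nlinarith

lemma abs_trace_mul_vecMulVec_le' (G : Matrix n n ℂ) (ψ : n → ℂ)
    (hψ : ∑ v, starRingEnd ℂ (ψ v) * ψ v = 1) :
    ‖((G * Matrix.vecMulVec ψ (star ψ)).trace)‖ ≤ opNorm G := by
  set x : EuclideanSpace ℂ n := (WithLp.equiv 2 _).symm ψ with hxdef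
  have hxx : ⟪x, x⟫_ℂ = 1 := by
    rw [← hψ, hxdef, PiLp.inner_apply]
    apply Finset.sum_congr rfl
    intro v _
    rw [RCLike.inner_apply']
    rfl
  have hx : ‖x‖ = 1 := by
    rw [inner_self_eq_norm_sq_to_K (𝕜 := ℂ) x] at hxx
    have : (‖x‖) ^ 2 = 1 := by
      simp only [← RCLike.ofReal_pow, ← RCLike.ofReal_one (K := ℂ)] at hxx
      exact RCLike.ofReal_injective (K := ℂ) hxx
    nlinarith [norm_nonneg x]
  have htr : (G * Matrix.vecMulVec ψ (star ψ)).trace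
      = ⟪x, Matrix.toEuclideanCLM (𝕜 := ℂ) G x⟫_ℂ := by
    rw [hxdef, WithLp.equiv_symm_apply, Matrix.toEuclideanCLM_toLp]
    simp only [PiLp.inner_apply, PiLp.toLp_apply, Matrix.trace,
      Matrix.diag_apply, Matrix.mul_apply, Matrix.vecMulVec_apply, Matrix.toLin'_apply,
      Matrix.mulVec, dotProduct, Pi.star_apply, RCLike.inner_apply']
    apply Finset.sum_congr rfl
    intro v _
    rw [Finset.mul_sum]
    apply Finset.sum_congr rfl
    intro w _
    simp [RCLike.star_def]
    ring
  rw [htr]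
  calc ‖(⟪x, Matrix.toEuclideanCLM (𝕜 := ℂ) G x⟫_ℂ)‖
      ≤ ‖x‖ * ‖Matrix.toEuclideanCLM (𝕜 := ℂ) G x‖ := by
        simpa using
          norm_inner_le_norm (𝕜 := ℂ) x (Matrix.toEuclideanCLM (𝕜 := ℂ) G x)
    _ ≤ ‖x‖ * (‖Matrix.toEuclideanCLM (𝕜 := ℂ) G‖ * ‖x‖) := by
        gcongr; exact (Matrix.toEuclideanCLM (𝕜 := ℂ) G).le_opNorm x
    _ = opNorm G := by rw [hx]; ring_nf; rfl

lemma exists_unitary_traceNorm' (D : Matrix n n ℂ) (hD : D.IsHermitian) :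
    ∃ A : Matrix n n ℂ, Aᴴ * A = 1 ∧ traceNorm D ≤ ‖((A * D).trace)‖ := by
  set V : Matrix n n ℂ := (hD.eigenvectorUnitary : Matrix n n ℂ) with hV
  set lam := hD.eigenvalues with hlam
  have hVu : Vᴴ * V = 1 := by
    rw [← Matrix.star_eq_conjTranspose]
    exact Matrix.mem_unitaryGroup_iff'.mp hD.eigenvectorUnitary.2
  have hVu' : V * Vᴴ = 1 := by
    rw [← Matrix.star_eq_conjTranspose]
    exact Matrix.mem_unitaryGroup_iff.mp hD.eigenvectorUnitary.2
  have hspec : D = V * Matrix.diagonal (fun i => ((lam i : ℝ) : ℂ)) * Vᴴ := by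
    exact hD.spectral_theorem
  set σ : n → ℂ := fun i => if 0 ≤ lam i then 1 else -1 with hσ
  set A := V * Matrix.diagonal σ * Vᴴ with hA
  set S := V * Matrix.diagonal (fun i => ((|lam i| : ℝ) : ℂ)) * Vᴴ with hS
  have hconj : ∀ M1 M2 : Matrix n n ℂ,
      (V * M1 * Vᴴ) * (V * M2 * Vᴴ) = V * (M1 * M2) * Vᴴ := by
    intro M1 M2
    calc (V * M1 * Vᴴ) * (V * M2 * Vᴴ) = V * (M1 * (Vᴴ * V) * M2) * Vᴴ := by
          noncomm_ring
      _ = V * (M1 * M2) * Vᴴ := by rw [hVu]; noncomm_ring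
  have hS2 : S ^ 2 = Dᴴ * D := by
    rw [hD.eq, hspec, sq, hS, hconj, hconj]
    rw [Matrix.diagonal_mul_diagonal, Matrix.diagonal_mul_diagonal]
    have heq : (fun i => ((|lam i| : ℝ) : ℂ) * ((|lam i| : ℝ) : ℂ))
        = fun i => ((lam i : ℝ) : ℂ) * ((lam i : ℝ) : ℂ) := by
      funext i
      rw [← Complex.ofReal_mul, ← Complex.ofReal_mul, abs_mul_abs_self]
    rw [heq]
  have hSpos : (S).PosSemidef := by
    apply Matrix.PosSemidef.mul_mul_conjTranspose_same
    refine Matrix.posSemidef_diagonal_iff.mpr fun i => ?_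
    rw [RCLike.nonneg_iff]
    simp [abs_nonneg]
  have hsqrt : traceNorm D = S.trace.re := by
    have h1 : traceNorm D = (cfc Real.sqrt (Dᴴ * D)).trace.re := by
      rw [(Matrix.isHermitian_conjTranspose_mul_self D).cfc_eq]; rfl
    have h2 : Dᴴ * D = cfc (fun x : ℝ => x ^ 2) D := by
      rw [cfc_pow_id (R := ℝ) D 2 hD.isSelfAdjoint, hD.eq, sq]
    have h3 : cfc Real.sqrt (cfc (fun x : ℝ => x ^ 2) D) = cfc (fun x : ℝ => |x|) D := by
      rw [← cfc_comp Real.sqrt (fun x : ℝ => x ^ 2) D hD.isSelfAdjoint]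
      apply cfc_congr
      intro x _
      simp [Function.comp, Real.sqrt_sq_eq_abs]
    have h4 : cfc (fun x : ℝ => |x|) D = S := by
      rw [hD.cfc_eq]; rfl
    rw [h1, h2, h3, h4]
  have htrS : S.trace = ((∑ i, |lam i| : ℝ) : ℂ) := by
    rw [hS, Matrix.trace_mul_cycle, hVu, one_mul, Matrix.trace_diagonal]
    push_cast
    rfl
  have htrAD : (A * D).trace = ((∑ i, |lam i| : ℝ) : ℂ) := by
    rw [hA, hspec, hconj, Matrix.trace_mul_cycle, hVu, one_mul,
      Matrix.diagonal_mul_diagonal, Matrix.trace_diagonal]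
    push_cast
    apply Finset.sum_congr rfl
    intro i _
    show (if 0 ≤ lam i then (1:ℂ) else -1) * (lam i : ℂ) = ((|lam i| : ℝ) : ℂ)
    split_ifs with h
    · rw [abs_of_nonneg h]; ring
    · rw [abs_of_neg (lt_of_not_ge h)]; push_cast; ring
  refine ⟨A, ?_, ?_⟩
  · have hAH : Aᴴ = A := by
      rw [hA]
      rw [Matrix.conjTranspose_mul, Matrix.conjTranspose_mul,
        Matrix.conjTranspose_conjTranspose, Matrix.diagonal_conjTranspose]
      have : star σ = σ := by
        funext i
        rw [hσ]
        simp only [Pi.star_apply]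
        split_ifs <;> simp
      rw [this, mul_assoc]
    rw [hAH, hA, hconj, Matrix.diagonal_mul_diagonal]
    have : (fun i => σ i * σ i) = fun _ => (1 : ℂ) := by
      funext i
      show (if 0 ≤ lam i then (1:ℂ) else -1) * (if 0 ≤ lam i then (1:ℂ) else -1) = 1
      split_ifs <;> ring
    rw [this, Matrix.diagonal_one, mul_one, hVu']
  · rw [htrAD]
    rw [hsqrt, htrS]
    simp only [Complex.ofReal_re, Complex.norm_real, Real.norm_eq_abs]
    exact le_abs_self _

lemma kron_conjTranspose {m : Type*} [Fintype m] [DecidableEq m]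
    (A : Matrix n n ℂ) (B : Matrix m m ℂ) :
    (A ⊗ₖ B)ᴴ = Aᴴ ⊗ₖ Bᴴ := by
  ext ⟨i, j⟩ ⟨k, l⟩
  simp [Matrix.conjTranspose_apply, Matrix.kroneckerMap_apply, mul_comm]

end Aux

/-- The core estimate of Appendix D: let `ρ(s) = |Ψ(s)⟩⟨Ψ(s)|` be a differentiable
family of pure states on `H_X ⊗ H_{X^c}` with `i d/ds Ψ(s) = H(s) Ψ(s)`, where
`H(s) = Σ_u H_u(s)` (each term Hermitian).  If each `H_u(s)` is within `ε_u(s)` (in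
operator norm) of an operator supported on `X^c` (i.e. of the form `I ⊗ K`), then
the derivative `D` of the reduced state `ρ_X(s) = Tr_{X^c} ρ(s)` satisfies
`‖D‖₁ ≤ 2 Σ_u ε_u(s)`. -/
theorem derivative_of_reduced_state_bound
    {a b : ℕ} {U : Type*} [Fintype U]
    (Ψ : ℝ → (Fin a × Fin b → ℂ))
    (Hu : U → ℝ → Matrix (Fin a × Fin b) (Fin a × Fin b) ℂ)
    (ε : U → ℝ → ℝ)
    (hΨderiv : ∀ s, HasDerivAt Ψ
      ((-Complex.I) • ((∑ u, Hu u s).mulVec (Ψ s))) s)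
    (hΨnorm : ∀ s, ∑ v, starRingEnd ℂ (Ψ s v) * Ψ s v = 1)
    (hherm : ∀ u s, (Hu u s).IsHermitian)
    (happrox : ∀ u s, ∃ K : Matrix (Fin b) (Fin b) ℂ,
      opNorm (Hu u s - (1 : Matrix (Fin a) (Fin a) ℂ) ⊗ₖ K) ≤ ε u s)
    (s : ℝ) (D : Matrix (Fin a) (Fin a) ℂ)
    (hD : ∀ i j, HasDerivAt
      (fun t => ∑ tt : Fin b, Ψ t (i, tt) * starRingEnd ℂ (Ψ t (j, tt)))
      (D i j) s) :
    traceNorm D ≤ 2 * ∑ u, ε u s := by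
  classical
  set ψ := Ψ s with hψdef
  set Hm := ∑ u, Hu u s with hHmdef
  have hHm : Hm.IsHermitian := by
    unfold Matrix.IsHermitian
    rw [hHmdef, Matrix.conjTranspose_sum]
    exact Finset.sum_congr rfl fun u _ => hherm u s
  set d : Fin a × Fin b → ℂ := (-Complex.I) • (Hm.mulVec ψ) with hddef
  have hcomp : ∀ v, HasDerivAt (fun t => Ψ t v) (d v) s :=
    fun v => hasDerivAt_pi.mp (hΨderiv s) v
  set ρ := Matrix.vecMulVec ψ (star ψ) with hρdef
  set C : Matrix (Fin a × Fin b) (Fin a × Fin b) ℂ :=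
    (-Complex.I) • (Hm * ρ - ρ * Hm) with hCdef
  have hDC : ∀ i j, D i j = ∑ tt, C (i, tt) (j, tt) := by
    intro i j
    have hder : HasDerivAt
        (fun t => ∑ tt : Fin b, Ψ t (i, tt) * starRingEnd ℂ (Ψ t (j, tt)))
        (∑ tt, (d (i,tt) * starRingEnd ℂ (ψ (j,tt)) + ψ (i,tt) * starRingEnd ℂ (d (j,tt)))) s := by
      apply HasDerivAt.fun_sum
      intro tt _
      exact (hcomp (i,tt)).mul ((hcomp (j,tt)).star)
    rw [(hD i j).unique hder]
    apply Finset.sum_congr rfl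
    intro tt _
    have hherm' : ∀ v w, starRingEnd ℂ (Hm v w) = Hm w v := fun v w => hHm.apply w v
    simp only [hCdef, Matrix.smul_apply, Matrix.sub_apply, Matrix.mul_apply, hρdef,
      Matrix.vecMulVec_apply, hddef, Pi.smul_apply, Matrix.mulVec, dotProduct,
      Pi.star_apply, map_sum, _root_.map_mul, map_neg, Complex.conj_I, smul_eq_mul,
      Finset.mul_sum, Finset.sum_mul, mul_neg, neg_mul, RCLike.star_def]
    simp only [hherm']
    rw [← Finset.sum_add_distrib, mul_sub, Finset.mul_sum, Finset.mul_sum,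
      ← Finset.sum_sub_distrib, ← Finset.sum_neg_distrib]
    apply Finset.sum_congr rfl
    intro x _
    ring
  have hρH : ρᴴ = ρ := by
    rw [hρdef]
    ext v w
    simp [Matrix.conjTranspose_apply, Matrix.vecMulVec_apply, mul_comm]
  have hCH : Cᴴ = C := by
    rw [hCdef, Matrix.conjTranspose_smul, Matrix.conjTranspose_sub,
      Matrix.conjTranspose_mul, Matrix.conjTranspose_mul, hρH, hHm.eq]
    rw [show (star (-Complex.I) : ℂ) = Complex.I by simp]
    rw [neg_smul, ← smul_neg, neg_sub]
  have hDh : D.IsHermitian := by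
    show Dᴴ = D
    ext i j
    rw [Matrix.conjTranspose_apply, hDC, hDC]
    rw [show (star (∑ tt : Fin b, C (j, tt) (i, tt)) : ℂ)
        = ∑ tt : Fin b, star (C (j, tt) (i, tt)) by exact star_sum _ _]
    apply Finset.sum_congr rfl
    intro tt _
    have h1 := congrFun (congrFun hCH (i, tt)) (j, tt)
    rw [← h1, Matrix.conjTranspose_apply]
  obtain ⟨A, hAu, hAD⟩ := exists_unitary_traceNorm' D hDh
  set B := A ⊗ₖ (1 : Matrix (Fin b) (Fin b) ℂ) with hBdef
  have hBu : Bᴴ * B = 1 := by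
    rw [hBdef, kron_conjTranspose, Matrix.conjTranspose_one,
      ← Matrix.mul_kronecker_mul, hAu, one_mul, Matrix.one_kronecker_one]
  have hBn : opNorm B ≤ 1 := opNorm_le_one_of_unitary' B hBu
  have htrBC : (A * D).trace = (B * C).trace := by
    simp only [Matrix.trace, Matrix.diag_apply, Matrix.mul_apply, hDC, hBdef,
      Fintype.sum_prod_type, Matrix.kroneckerMap_apply, Matrix.one_apply, ite_mul,
      one_mul, zero_mul, Finset.sum_ite_eq, Finset.mem_univ, if_true, Finset.mul_sum]
    simp only [mul_ite, mul_one, mul_zero, ite_mul, zero_mul, Finset.sum_ite_eq,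
      Finset.mem_univ, if_true]
    refine Finset.sum_congr rfl fun x _ => ?_
    exact Finset.sum_comm (s := Finset.univ) (t := Finset.univ) (f := fun x_1 i => A x x_1 * C (x_1, i) (x, i))
    
  choose K hK using fun u => happrox u s
  have hBE : ∀ u, B * ((1 : Matrix (Fin a) (Fin a) ℂ) ⊗ₖ K u)
      = ((1 : Matrix (Fin a) (Fin a) ℂ) ⊗ₖ K u) * B := by
    intro u
    rw [hBdef, ← Matrix.mul_kronecker_mul, ← Matrix.mul_kronecker_mul]
    simp
  have hsplit : B * Hm - Hm * B
      = ∑ u, (B * (Hu u s - (1 : Matrix (Fin a) (Fin a) ℂ) ⊗ₖ K u)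
        - (Hu u s - (1 : Matrix (Fin a) (Fin a) ℂ) ⊗ₖ K u) * B) := by
    have hterm : ∀ u, B * (Hu u s - (1 : Matrix (Fin a) (Fin a) ℂ) ⊗ₖ K u)
        - (Hu u s - (1 : Matrix (Fin a) (Fin a) ℂ) ⊗ₖ K u) * B
        = B * Hu u s - Hu u s * B := by
      intro u
      rw [mul_sub, sub_mul, hBE u]
      abel
    rw [Finset.sum_congr rfl (fun u _ => hterm u), hHmdef, Finset.mul_sum,
      Finset.sum_mul, ← Finset.sum_sub_distrib]
  have htrC : (B * C).trace = (-Complex.I) * ((B * Hm - Hm * B) * ρ).trace := by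
    rw [hCdef, Matrix.mul_smul, Matrix.trace_smul, smul_eq_mul]
    congr 1
    have e1 : B * (Hm * ρ - ρ * Hm) = B * Hm * ρ - B * ρ * Hm := by noncomm_ring
    have e3 : (B * Hm - Hm * B) * ρ = B * Hm * ρ - Hm * B * ρ := by noncomm_ring
    have e2 : (B * ρ * Hm).trace = (Hm * B * ρ).trace := by
      rw [Matrix.trace_mul_cycle]
    rw [e1, e3, Matrix.trace_sub, Matrix.trace_sub, e2]
  have hεnn : ∀ u, 0 ≤ ε u s := fun u =>
    le_trans (opNorm_nonneg' _) (hK u)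
  have hbound : ∀ u : U, ‖(((B * (Hu u s - (1 : Matrix (Fin a) (Fin a) ℂ) ⊗ₖ K u)
      - (Hu u s - (1 : Matrix (Fin a) (Fin a) ℂ) ⊗ₖ K u) * B) * ρ).trace)‖ ≤ 2 * ε u s := by
    intro u
    set M := Hu u s - (1 : Matrix (Fin a) (Fin a) ℂ) ⊗ₖ K u with hM
    calc ‖(((B * M - M * B) * ρ).trace)‖ ≤ opNorm (B * M - M * B) := by
          rw [hρdef]
          exact abs_trace_mul_vecMulVec_le' _ ψ (hΨnorm s)
      _ ≤ 2 * opNorm B * opNorm M := opNorm_comm_le' B M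
      _ ≤ 2 * ε u s := by
          have h1 := hK u
          have h2 := opNorm_nonneg' M
          have h3 := opNorm_nonneg' B
          nlinarith
  calc traceNorm D ≤ ‖((A * D).trace)‖ := hAD
    _ = ‖((B * C).trace)‖ := by rw [htrBC]
    _ = ‖(((B * Hm - Hm * B) * ρ).trace)‖ := by
        rw [htrC, norm_mul]
        simp
    _ = ‖(∑ u, ((B * (Hu u s - (1 : Matrix (Fin a) (Fin a) ℂ) ⊗ₖ K u)
        - (Hu u s - (1 : Matrix (Fin a) (Fin a) ℂ) ⊗ₖ K u) * B) * ρ).trace)‖ := by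
        rw [hsplit, Finset.sum_mul, Matrix.trace_sum]
    _ ≤ ∑ u, ‖(((B * (Hu u s - (1 : Matrix (Fin a) (Fin a) ℂ) ⊗ₖ K u)
        - (Hu u s - (1 : Matrix (Fin a) (Fin a) ℂ) ⊗ₖ K u) * B) * ρ).trace)‖ := by
        exact norm_sum_le _ _
    _ ≤ ∑ u, 2 * ε u s := Finset.sum_le_sum fun u _ => hbound u
    _ = 2 * ∑ u, ε u s := by rw [Finset.mul_sum]
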